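/- Factorization of the even coefficients: for all integers k, l ≥ 0, ĉ′_e(k, l; s) = ĉ′_e(k, 0; s) · ĉ′_e(0, l; t^{2k} s), as an identity of rational functions in a, c, t, s. -/
import Mathlib


/-!
Factorization of the even coefficients `ĉ′_e(k,l;s) = ĉ′_e(k,0;s)·ĉ′_e(0,l;t^{2k}s)`,
as an identity in the rational function field ℚ(a,c,t,s).
-/

open Finset

noncomputable section

/-- The rational function field ℚ(a,c,t,s). -/
abbrev RF : Type := FractionRing (MvPolynomial (Fin 4) ℚ)

def gen (i : Fin 4) : RF := algebraMap (MvPolynomial (Fin 4) ℚ) RF (MvPolynomial.X i)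

def a : RF := gen 0
def c : RF := gen 1
def t : RF := gen 2
def s : RF := gen 3

/-- The q-Pochhammer symbol (z;q)_k. -/
def qPoch (z q : RF) (k : ℕ) : RF := ∏ j ∈ Finset.range k, (1 - z * q ^ j)

/-- `ĉ′_e(k,l;s)`. -/
def cep (S : RF) (k l : ℕ) : RF :=
  ((qPoch (t*c^2/a^2) (t^2) k * qPoch (S*c^2*t) (t^2) k * qPoch (S^2*c^4/t^2) (t^2) k) /
    (qPoch (t^2) (t^2) k * qPoch (S*c^2/t) (t^2) k * qPoch (S^2*a^2*c^2/t) (t^2) k)) *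
  ((qPoch (1/c^2) t l * qPoch (S/t) t (2*k+l)) / (qPoch t t l * qPoch (S*c^2) t (2*k+l))) *
  ((1 - S * t ^ (2*(k:ℤ) + 2*(l:ℤ) - 1)) / (1 - S/t)) * a^(2*k) * c^(2*l)

lemma qPoch_split (z q : RF) (m n : ℕ) :
    qPoch z q (m + n) = qPoch z q m * qPoch (z * q ^ m) q n := by
  unfold qPoch
  rw [Finset.prod_range_add]
  congr 1
  refine Finset.prod_congr rfl fun j _ => ?_
  rw [pow_add]; ring

lemma qPoch_zero (z q : RF) : qPoch z q 0 = 1 := by simp [qPoch]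

lemma t_ne_zero : t ≠ 0 := by
  have inj := IsFractionRing.injective (MvPolynomial (Fin 4) ℚ) RF
  simp only [t, gen]
  exact fun h => MvPolynomial.X_ne_zero 2 (inj (by simpa using h))

lemma key_ne (k : ℕ) : s * t ^ (2*k) ≠ t := by
  intro h
  have inj := IsFractionRing.injective (MvPolynomial (Fin 4) ℚ) RF
  have h2 : (MvPolynomial.X 3 * MvPolynomial.X 2 ^ (2*k) : MvPolynomial (Fin 4) ℚ)
      = MvPolynomial.X 2 := by
    apply inj
    simpa [s, t, gen, map_mul, map_pow] using h
  have h3 := congrArg (MvPolynomial.eval (fun i : Fin 4 => if i = 3 then (0:ℚ) else 1)) h2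
  simp at h3

/-- `ĉ′_e(k,l;s) = ĉ′_e(k,0;s) · ĉ′_e(0,l;t^{2k}s)`. -/
theorem cep_factorization (k l : ℕ) :
    cep s k l = cep s k 0 * cep (t^(2*k) * s) 0 l := by
  have ht : t ≠ 0 := t_ne_zero
  have hz : t ^ (2*(k:ℤ) - 1) = t ^ (2*k) / t := by
    rw [zpow_sub₀ ht, zpow_one, show (2*(k:ℤ)) = ((2*k:ℕ):ℤ) by push_cast; ring, zpow_natCast]
  have hY : (1 : RF) - s * t ^ (2*(k:ℤ) - 1) ≠ 0 := by
    intro h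
    apply key_ne k
    have h1 : s * t ^ (2*(k:ℤ) - 1) = 1 := by linear_combination -h
    rw [hz] at h1
    field_simp at h1
    exact h1
  have e1 : (s/t) * t^(2*k) = t^(2*k)*s/t := by ring
  have e2 : (s*c^2) * t^(2*k) = t^(2*k)*s*c^2 := by ring
  have hsplit1 : qPoch (s/t) t (2*k+l)
      = qPoch (s/t) t (2*k) * qPoch (t^(2*k)*s/t) t l := by
    rw [qPoch_split, e1]
  have hsplit2 : qPoch (s*c^2) t (2*k+l)
      = qPoch (s*c^2) t (2*k) * qPoch (t^(2*k)*s*c^2) t l := by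
    rw [qPoch_split, e2]
  have epow : (1:RF) - t^(2*k)*s * t^(2*((0:ℕ):ℤ)+2*(l:ℤ)-1)
      = 1 - s * t^(2*(k:ℤ)+2*(l:ℤ)-1) := by
    congr 1
    rw [← zpow_natCast t (2*k)]
    rw [mul_comm (t^((2*k:ℕ):ℤ)) s, mul_assoc, ← zpow_add₀ ht]
    congr 2
    push_cast; ring
  have eY1 : (1:RF) - s * t ^ (2*(k:ℤ) + 2*((0:ℕ):ℤ) - 1) = 1 - s * t ^ (2*(k:ℤ) - 1) := by
    norm_num
  have eY2 : (1:RF) - (t^(2*k)*s)/t = 1 - s * t ^ (2*(k:ℤ) - 1) := by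
    rw [hz]; ring
  simp only [cep, Nat.mul_zero, Nat.add_zero, Nat.zero_add, qPoch_zero, pow_zero,
    one_mul, mul_one, div_one]
  rw [hsplit1, hsplit2, epow, eY1, eY2]
  set A1 := qPoch (t*c^2/a^2) (t^2) k
  set A2 := qPoch (s*c^2*t) (t^2) k
  set A3 := qPoch (s^2*c^4/t^2) (t^2) k
  set B1 := qPoch (t^2) (t^2) k
  set B2 := qPoch (s*c^2/t) (t^2) k
  set B3 := qPoch (s^2*a^2*c^2/t) (t^2) k
  set P := qPoch (1/c^2) t l
  set R := qPoch t t l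
  set Q1 := qPoch (s/t) t (2*k)
  set Q2 := qPoch (t^(2*k)*s/t) t l
  set W1 := qPoch (s*c^2) t (2*k)
  set W2 := qPoch (t^(2*k)*s*c^2) t l
  set Y := (1:RF) - s * t ^ (2*(k:ℤ) - 1)
  set E := (1:RF) - s * t ^ (2*(k:ℤ)+2*(l:ℤ)-1)
  set u := (1:RF) - s/t
  have hYY : Y * Y⁻¹ = 1 := mul_inv_cancel₀ hY
  linear_combination (-(A1*A2*A3/(B1*B2*B3) * (P*Q1*Q2/(R*W1*W2)) * (E/u) * a^(2*k) * c^(2*l))) * hYY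

end
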